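/- For n ≥ 3, let L = ⌊log n⌋ and let A_n = {τ ∈ S_n : τ(i) < τ(n) for all 1 ≤ i ≤ L}. Then P(π_n ∈ A_n) = 1/(L+1), where π_n is a uniformly distributed random permutation of S_n, and P(ρ_n ∈ A_n) = n / ( n + L(L+1)/2 ). In particular, P(ρ_n ∈ A_n) − P(π_n ∈ A_n) → 1 as n → ∞. -/

import Mathlib

open MeasureTheory ProbabilityTheory Filter
open scoped ENNReal NNReal Topology

/-- The hypotheses defining an inverse-unfair permutation `ρ` on a probability
space `(Ω, μ)`: `Z i` is (distributed as) the maximum of `i+1` i.i.d. uniform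
random variables on `(0,1)` (players are indexed by `Fin n`, player `i : Fin n`
drawing `(i : ℕ) + 1` numbers), the `Z i` are independent, and almost surely
`ρ ω` is the rank permutation of `(Z 0 ω, …, Z (n-1) ω)`. -/
structure IsInverseUnfair {n : ℕ} {Ω : Type*} [MeasurableSpace Ω]
    (μ : Measure Ω) (Z : Fin n → Ω → ℝ) (ρ : Ω → Equiv.Perm (Fin n)) : Prop where
  prob : IsProbabilityMeasure μ
  meas : ∀ i, Measurable (Z i)
  indep : iIndepFun (m := fun _ : Fin n => (inferInstance : MeasurableSpace ℝ)) Z μ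
  cdf : ∀ i : Fin n, ∀ t ∈ Set.Icc (0 : ℝ) 1,
      μ {ω | Z i ω ≤ t} = ENNReal.ofReal (t ^ ((i : ℕ) + 1))
  rhoMeas : ∀ σ : Equiv.Perm (Fin n), MeasurableSet {ω | ρ ω = σ}
  rank : ∀ᵐ ω ∂μ, ∀ i j : Fin n, (ρ ω i < ρ ω j ↔ Z i ω < Z j ω)

/-- The event `A_n = {τ : τ(i) < τ(n) for all 1 ≤ i ≤ ⌊log n⌋}`, in 0-indexed
form: all positions `i` with `(i : ℕ) + 1 ≤ ⌊log n⌋` map below the image of the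
last position. -/
def inEventA (n : ℕ) (τ : Equiv.Perm (Fin n)) : Prop :=
  ∀ i : Fin n, (i : ℕ) + 1 ≤ ⌊Real.log n⌋₊ →
    ∀ j : Fin n, (j : ℕ) = n - 1 → τ i < τ j

noncomputable instance (n : ℕ) : DecidablePred (inEventA n) := fun _ => by
  unfold inEventA; infer_instance


section Aux

open Finset in
lemma card_event_mul (n L : ℕ) (hn : 1 ≤ n) (hLn : L + 1 ≤ n)
    (P : Equiv.Perm (Fin n) → Prop) [DecidablePred P]
    (hP : ∀ τ, P τ ↔ ∀ i : Fin n, (i : ℕ) + 1 ≤ L →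
      ∀ j : Fin n, (j : ℕ) = n - 1 → τ i < τ j) :
    (Finset.univ.filter P).card * (L + 1) = n.factorial := by
  set last : Fin n := ⟨n - 1, by omega⟩ with hlast
  set S : Finset (Fin n) := Finset.univ.filter (fun i : Fin n => (i : ℕ) + 1 ≤ L) with hSdef
  have hmemS : ∀ i : Fin n, i ∈ S ↔ (i : ℕ) + 1 ≤ L := by
    intro i; simp [hSdef]
  have hlastS : last ∉ S := by
    rw [hmemS]
    simp only [hlast]
    omega
  have hScard : S.card = L := by
    refine Finset.card_eq_of_bijective (fun k hk => (⟨k, by omega⟩ : Fin n)) ?_ ?_ ?_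
    · intro a ha
      rw [hmemS] at ha
      exact ⟨(a : ℕ), by omega, by ext; rfl⟩
    · intro i hi
      rw [hmemS]
      simpa using hi
    · intro i j hi hj hij
      simpa [Fin.ext_iff] using hij
  set T : Finset (Fin n) := insert last S with hTdef
  have hTcard : T.card = L + 1 := by
    rw [hTdef, Finset.card_insert_of_notMem hlastS, hScard]
  have hlastT : last ∈ T := Finset.mem_insert_self _ _
  have hTne : ∀ σ : Equiv.Perm (Fin n), (T.image σ).Nonempty :=
    fun σ => (Finset.insert_nonempty _ _).image σ
  -- the "argmax" position
  set p : Equiv.Perm (Fin n) → Fin n :=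
    fun σ => σ.symm ((T.image σ).max' (hTne σ)) with hpdef
  have hpT : ∀ σ, p σ ∈ T := by
    intro σ
    obtain ⟨i, hiT, hi⟩ := Finset.mem_image.1 ((T.image σ).max'_mem (hTne σ))
    rw [hpdef]
    simp only [← hi, Equiv.symm_apply_apply]
    exact hiT
  have hple : ∀ σ : Equiv.Perm (Fin n), ∀ i ∈ T, σ i ≤ σ (p σ) := by
    intro σ i hi
    rw [hpdef]
    simp only [Equiv.apply_symm_apply]
    exact Finset.le_max' _ _ (Finset.mem_image_of_mem σ hi)
  -- swap maps T to T
  have hswapT : ∀ q : Fin n, q ∈ T → ∀ i ∈ T, Equiv.swap q last i ∈ T := by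
    intro q hq i hi
    rcases eq_or_ne i q with rfl | hiq
    · rw [Equiv.swap_apply_left]; exact hlastT
    rcases eq_or_ne i last with rfl | hil
    · rw [Equiv.swap_apply_right]; exact hq
    · rw [Equiv.swap_apply_of_ne_of_ne hiq hil]; exact hi
  have key : (Finset.univ : Finset (Equiv.Perm (Fin n))).card = ((Finset.univ.filter P) ×ˢ T).card := by
    refine Finset.card_bij'
      (fun σ _ => (σ * Equiv.swap (p σ) last, p σ))
      (fun x _ => x.1 * Equiv.swap x.2 last) ?_ ?_ ?_ ?_
    · -- forward membership
      intro σ _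
      rw [Finset.mem_product]
      refine ⟨Finset.mem_filter.2 ⟨Finset.mem_univ _, ?_⟩, hpT σ⟩
      rw [hP]
      intro i hi j hj
      have hjlast : j = last := by ext; simpa using hj
      subst hjlast
      have hiS : i ∈ S := (hmemS i).2 hi
      have hine : i ≠ last := by
        intro hEq
        rw [hEq, hmemS] at hiS
        simp only [hlast] at hiS
        omega
      have hiT : i ∈ T := Finset.mem_insert_of_mem hiS
      simp only [Equiv.Perm.mul_apply, Equiv.swap_apply_right]
      have hle : σ (Equiv.swap (p σ) last i) ≤ σ (p σ) :=
        hple σ _ (hswapT (p σ) (hpT σ) i hiT)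
      refine lt_of_le_of_ne hle ?_
      intro hEq
      have : Equiv.swap (p σ) last i = p σ := σ.injective hEq
      have h2 := congrArg (Equiv.swap (p σ) last) this
      rw [Equiv.swap_apply_self, Equiv.swap_apply_left] at h2
      exact hine h2
    · intro x _; exact Finset.mem_univ _
    · -- left inverse
      intro σ _
      simp [mul_assoc, Equiv.swap_mul_self]
    · -- right inverse
      rintro ⟨τ, q⟩ hx
      rw [Finset.mem_product] at hx
      obtain ⟨hτ, hq⟩ := hx
      have hτP := (hP τ).1 (Finset.mem_filter.1 hτ).2
      set σ : Equiv.Perm (Fin n) := τ * Equiv.swap q last with hσdef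
      have hτT : ∀ k ∈ T, τ k ≤ τ last := by
        intro k hk
        rcases Finset.mem_insert.1 hk with rfl | hkS
        · exact le_refl _
        · exact (hτP k ((hmemS k).1 hkS) last (by simp [hlast])).le
      have hσp : σ q = τ last := by
        rw [hσdef]
        simp [Equiv.swap_apply_left]
      have hM : (T.image σ).max' (hTne σ) = τ last := by
        refine le_antisymm ?_ ?_
        · refine Finset.max'_le _ _ _ ?_
          intro y hy
          obtain ⟨i, hiT, rfl⟩ := Finset.mem_image.1 hy
          rw [hσdef]
          simp only [Equiv.Perm.mul_apply]
          exact hτT _ (hswapT q hq i hiT)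
        · exact Finset.le_max' _ _ (Finset.mem_image.2 ⟨q, hq, hσp⟩)
      have hpσ : p σ = q := by
        rw [hpdef]
        simp only [hM, ← hσp, Equiv.symm_apply_apply]
      simp only [hpσ]
      refine Prod.ext ?_ rfl
      simp [hσdef, mul_assoc, Equiv.swap_mul_self]
  rw [Finset.card_product, hTcard, Finset.card_univ, Fintype.card_perm, Fintype.card_fin] at key
  omega


lemma map_rpow_inv_eq (a : ℕ) (ha : 1 ≤ a) (ν : Measure ℝ) [IsProbabilityMeasure ν]
    (hcdf : ∀ t ∈ Set.Icc (0:ℝ) 1, ν (Set.Iic t) = ENNReal.ofReal (t ^ a)) :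
    ν = Measure.map (fun u : ℝ => u ^ ((a : ℝ))⁻¹)
      ((volume : Measure ℝ).restrict (Set.Ioc 0 1)) := by
  have hg : Measurable (fun u : ℝ => u ^ ((a : ℝ))⁻¹) := by fun_prop
  have hapos : (0:ℝ) < (a:ℝ)⁻¹ := by positivity
  refine Measure.ext_of_Iic ν _ (fun t => ?_)
  rw [Measure.map_apply hg measurableSet_Iic,
    Measure.restrict_apply (hg measurableSet_Iic)]
  rcases lt_or_ge t 0 with ht | ht
  · have h1 : ν (Set.Iic t) = 0 := by
      refine le_antisymm ?_ (by simp)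
      have := hcdf 0 (by constructor <;> norm_num)
      rw [zero_pow (by omega), ENNReal.ofReal_zero] at this
      rw [← this]
      exact measure_mono (Set.Iic_subset_Iic.2 ht.le)
    have h2 : (fun u : ℝ => u ^ ((a : ℝ))⁻¹) ⁻¹' Set.Iic t ∩ Set.Ioc 0 1 = ∅ := by
      ext u
      simp only [Set.mem_inter_iff, Set.mem_preimage, Set.mem_Iic, Set.mem_Ioc,
        Set.mem_empty_iff_false, iff_false]
      rintro ⟨h1', h2', _⟩
      exact absurd (lt_of_le_of_lt h1' ht) (not_lt.2 (Real.rpow_pos_of_pos h2' _).le)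
    rw [h1, h2, measure_empty]
  rcases le_or_gt t 1 with ht1 | ht1
  · rw [hcdf t ⟨ht, ht1⟩]
    have hset : (fun u : ℝ => u ^ ((a : ℝ))⁻¹) ⁻¹' Set.Iic t ∩ Set.Ioc 0 1
        = Set.Ioc 0 (t ^ a) := by
      ext u
      simp only [Set.mem_inter_iff, Set.mem_preimage, Set.mem_Iic, Set.mem_Ioc]
      constructor
      · rintro ⟨h1', h2', _⟩
        refine ⟨h2', ?_⟩
        have := (Real.rpow_inv_le_iff_of_pos h2'.le ht (by positivity)).1 h1'
        rwa [Real.rpow_natCast] at this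
      · rintro ⟨h1', h2'⟩
        have hta : t ^ a ≤ 1 := pow_le_one₀ ht ht1
        refine ⟨?_, h1', h2'.trans hta⟩
        rw [Real.rpow_inv_le_iff_of_pos h1'.le ht (by positivity), Real.rpow_natCast]
        exact h2'
    rw [hset, Real.volume_Ioc]
    norm_num
  · have h1 : ν (Set.Iic t) = 1 := by
      refine le_antisymm prob_le_one ?_
      have := hcdf 1 (by constructor <;> norm_num)
      rw [one_pow, ENNReal.ofReal_one] at this
      rw [← this]
      exact measure_mono (Set.Iic_subset_Iic.2 ht1.le)
    have h2 : (fun u : ℝ => u ^ ((a : ℝ))⁻¹) ⁻¹' Set.Iic t ∩ Set.Ioc 0 1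
        = Set.Ioc 0 1 := by
      refine Set.inter_eq_self_of_subset_right (fun u hu => ?_)
      simp only [Set.mem_preimage, Set.mem_Iic]
      exact (Real.rpow_le_one hu.1.le hu.2 hapos.le).trans ht1.le
    rw [h1, h2, Real.volume_Ioc]
    norm_num

lemma measure_lt_of_cdf_pow {Ω : Type*} [MeasurableSpace Ω] (μ : Measure Ω)
    [IsProbabilityMeasure μ] (X Y : Ω → ℝ) (hX : Measurable X) (hY : Measurable Y)
    (hXY : IndepFun X Y μ) (a b : ℕ) (ha : 1 ≤ a) (hb : 1 ≤ b)
    (hFX : ∀ t ∈ Set.Icc (0:ℝ) 1, μ {ω | X ω ≤ t} = ENNReal.ofReal (t ^ a))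
    (hFY : ∀ t ∈ Set.Icc (0:ℝ) 1, μ {ω | Y ω ≤ t} = ENNReal.ofReal (t ^ b)) :
    μ {ω | X ω < Y ω} = ENNReal.ofReal ((b : ℝ) / ((a : ℝ) + (b : ℝ))) := by
  have habpos : (0:ℝ) < (a:ℝ) + b := by positivity
  set νX := μ.map X with hνX
  set νY := μ.map Y with hνY
  have hinstX : IsProbabilityMeasure νX := Measure.isProbabilityMeasure_map hX.aemeasurable
  have hinstY : IsProbabilityMeasure νY := Measure.isProbabilityMeasure_map hY.aemeasurable
  have hcX : ∀ t ∈ Set.Icc (0:ℝ) 1, νX (Set.Iic t) = ENNReal.ofReal (t ^ a) := by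
    intro t ht
    rw [hνX, Measure.map_apply hX measurableSet_Iic]
    exact hFX t ht
  have hcY : ∀ t ∈ Set.Icc (0:ℝ) 1, νY (Set.Iic t) = ENNReal.ofReal (t ^ b) := by
    intro t ht
    rw [hνY, Measure.map_apply hY measurableSet_Iic]
    exact hFY t ht
  have hsetm : MeasurableSet {p : ℝ × ℝ | p.1 < p.2} :=
    measurableSet_lt measurable_fst measurable_snd
  have h1 : μ {ω | X ω < Y ω} = (νX.prod νY) {p : ℝ × ℝ | p.1 < p.2} := by
    rw [← ((indepFun_iff_map_prod_eq_prod_map_map hX.aemeasurable hY.aemeasurable).1 hXY),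
      Measure.map_apply (hX.prodMk hY) hsetm]
    rfl
  have h2 : (νX.prod νY) {p : ℝ × ℝ | p.1 < p.2} = ∫⁻ x, νY (Set.Ioi x) ∂νX := by
    rw [Measure.prod_apply hsetm]
    rfl
  -- a.e. support of νX in Ioc 0 1
  have hX01 : ∀ᵐ x ∂νX, x ∈ Set.Ioc (0:ℝ) 1 := by
    have hc : νX (Set.Ioc (0:ℝ) 1)ᶜ = 0 := by
      have hsub : (Set.Ioc (0:ℝ) 1)ᶜ ⊆ Set.Iic 0 ∪ Set.Ioi 1 := by
        intro x hx
        simp only [Set.mem_compl_iff, Set.mem_Ioc, not_and_or, not_lt, not_le] at hx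
        rcases hx with hx | hx
        · exact Or.inl hx
        · exact Or.inr hx
      refine measure_mono_null hsub (le_antisymm ?_ (by simp))
      refine (measure_union_le _ _).trans ?_
      have e1 : νX (Set.Iic (0:ℝ)) = 0 := by
        have := hcX 0 (by constructor <;> norm_num)
        simpa [zero_pow (show a ≠ 0 by omega)] using this
      have e2 : νX (Set.Ioi (1:ℝ)) = 0 := by
        have hcompl : Set.Ioi (1:ℝ) = (Set.Iic 1)ᶜ := by simp
        rw [hcompl, measure_compl measurableSet_Iic (measure_ne_top _ _),
          hcX 1 (by constructor <;> norm_num)]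
        simp
      rw [e1, e2]
      simp
    rw [ae_iff]
    exact hc
  have h3 : ∫⁻ x, νY (Set.Ioi x) ∂νX
      = ∫⁻ x, ENNReal.ofReal (1 - x ^ b) ∂νX := by
    refine lintegral_congr_ae ?_
    filter_upwards [hX01] with x hx
    have hx0 : (0:ℝ) ≤ x := hx.1.le
    have hxb : x ^ b ≤ 1 := pow_le_one₀ hx0 hx.2
    have : Set.Ioi x = (Set.Iic x)ᶜ := by simp
    rw [this, measure_compl measurableSet_Iic (measure_ne_top _ _),
      hcY x ⟨hx0, hx.2⟩, measure_univ,
      ENNReal.ofReal_sub 1 (by positivity), ENNReal.ofReal_one]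
  have hνXeq := map_rpow_inv_eq a ha νX hcX
  have hfmeas : Measurable (fun x : ℝ => ENNReal.ofReal (1 - x ^ b)) := by fun_prop
  have hgmeas : Measurable (fun u : ℝ => u ^ ((a : ℝ))⁻¹) := by fun_prop
  have h4 : ∫⁻ x, ENNReal.ofReal (1 - x ^ b) ∂νX
      = ∫⁻ u in Set.Ioc (0:ℝ) 1, ENNReal.ofReal (1 - (u ^ ((a:ℝ))⁻¹) ^ b) := by
    rw [hνXeq, lintegral_map hfmeas hgmeas]
  set c : ℝ := (b : ℝ) / (a : ℝ) with hc
  have hcpos : 0 < c := by positivity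
  have h5 : ∫⁻ u in Set.Ioc (0:ℝ) 1, ENNReal.ofReal (1 - (u ^ ((a:ℝ))⁻¹) ^ b)
      = ∫⁻ u in Set.Ioc (0:ℝ) 1, ENNReal.ofReal (1 - u ^ c) := by
    refine setLIntegral_congr_fun measurableSet_Ioc ?_
    intro u hu
    show ENNReal.ofReal (1 - (u ^ ((a:ℝ))⁻¹) ^ b) = ENNReal.ofReal (1 - u ^ c)
    congr 1
    rw [← Real.rpow_natCast (u ^ ((a:ℝ))⁻¹) b, ← Real.rpow_mul hu.1.le]
    congr 1
    rw [hc]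
    field_simp
  have hint : IntegrableOn (fun u : ℝ => 1 - u ^ c) (Set.Ioc 0 1) volume := by
    have : IntervalIntegrable (fun u : ℝ => u ^ c) volume 0 1 :=
      intervalIntegral.intervalIntegrable_rpow' (by linarith)
    rw [intervalIntegrable_iff_integrableOn_Ioc_of_le (by norm_num)] at this
    exact (integrableOn_const (hs := measure_Ioc_lt_top.ne)).sub this
  have h6 : ∫⁻ u in Set.Ioc (0:ℝ) 1, ENNReal.ofReal (1 - u ^ c)
      = ENNReal.ofReal (∫ u in Set.Ioc (0:ℝ) 1, (1 - u ^ c)) := by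
    rw [← ofReal_integral_eq_lintegral_ofReal hint]
    filter_upwards [ae_restrict_mem measurableSet_Ioc] with u hu
    have : u ^ c ≤ 1 := Real.rpow_le_one hu.1.le hu.2 hcpos.le
    simp only [Pi.zero_apply]
    linarith
  have h7 : ∫ u in Set.Ioc (0:ℝ) 1, (1 - u ^ c) = (b : ℝ) / ((a:ℝ) + b) := by
    rw [← intervalIntegral.integral_of_le (by norm_num : (0:ℝ) ≤ 1)]
    rw [intervalIntegral.integral_sub intervalIntegrable_const
      (intervalIntegral.intervalIntegrable_rpow' (by linarith))]
    rw [integral_rpow (Or.inl (by linarith)), intervalIntegral.integral_const]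
    rw [Real.one_rpow, Real.zero_rpow (by positivity)]
    have : c + 1 = ((a:ℝ) + b) / a := by
      rw [hc]; field_simp; ring
    rw [this]
    have ha' : (a:ℝ) ≠ 0 := by positivity
    field_simp
    simp only [sub_zero, smul_eq_mul, mul_one, one_mul]
    ring
  rw [h1, h2, h3, h4, h5, h6, h7]

lemma log_facts (n : ℕ) (hn : 3 ≤ n) :
    1 ≤ ⌊Real.log n⌋₊ ∧ ⌊Real.log n⌋₊ + 1 ≤ n := by
  have hn0 : (0:ℝ) < n := by positivity
  constructor
  · refine Nat.le_floor ?_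
    rw [Nat.cast_one, Real.le_log_iff_exp_le hn0]
    have h1 : Real.exp 1 < 2.7182818286 := Real.exp_one_lt_d9
    have h3 : (3:ℝ) ≤ n := by exact_mod_cast hn
    nlinarith
  · have h1 : Real.log n ≤ ((n - 1 : ℕ) : ℝ) := by
      have := Real.log_le_sub_one_of_pos hn0
      have h2 : ((n - 1 : ℕ) : ℝ) = (n : ℝ) - 1 := by
        push_cast [Nat.cast_sub (by omega : 1 ≤ n)]; ring
      linarith [this, h2.ge]
    have h2 : ⌊Real.log n⌋₊ ≤ ⌊((n - 1 : ℕ) : ℝ)⌋₊ := Nat.floor_le_floor h1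
    rw [Nat.floor_natCast] at h2
    omega

lemma prob_eventA (n : ℕ) (hn : 3 ≤ n) {Ω : Type*} [MeasurableSpace Ω]
    (μ : Measure Ω) (Z : Fin n → Ω → ℝ) (ρ : Ω → Equiv.Perm (Fin n))
    (hI : IsInverseUnfair μ Z ρ) :
    μ {ω | inEventA n (ρ ω)}
      = ENNReal.ofReal ((n : ℝ)
          / ((n : ℝ) + (⌊Real.log n⌋₊ : ℝ) * ((⌊Real.log n⌋₊ : ℝ) + 1) / 2)) := by
  haveI := hI.prob
  obtain ⟨hL1, hLn1⟩ := log_facts n hn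
  set L : ℕ := ⌊Real.log (n : ℝ)⌋₊ with hLdef
  set last : Fin n := ⟨n - 1, by omega⟩ with hlast
  set S : Finset (Fin n) := Finset.univ.filter (fun i : Fin n => (i : ℕ) + 1 ≤ L)
    with hSdef
  have hmemS : ∀ i : Fin n, i ∈ S ↔ (i : ℕ) + 1 ≤ L := by intro i; simp [hSdef]
  have hS : S.Nonempty := ⟨⟨0, by omega⟩, (hmemS _).2 (by simpa using hL1)⟩
  have hlastS : last ∉ S := by rw [hmemS]; simp only [hlast]; omega
  set m : ℕ := ∑ i ∈ S, ((i : ℕ) + 1) with hmdef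
  have hsum : ∑ i ∈ S, ((i : ℕ) + 1) = ∑ k ∈ Finset.range L, (k + 1) := by
    refine Finset.sum_bij' (fun a _ => (a : ℕ)) (fun k hk => (⟨k, by
      rw [Finset.mem_range] at hk; omega⟩ : Fin n)) ?_ ?_ ?_ ?_ ?_
    · intro a ha
      have ha' := (hmemS a).1 ha
      show (a : ℕ) ∈ Finset.range L
      rw [Finset.mem_range]; omega
    · intro k hk
      rw [Finset.mem_range] at hk
      exact (hmemS _).2 (by simpa using hk)
    · intro a _; ext; rfl
    · intro k _; rfl
    · intro a _; rfl
  have hm2 : 2 * m = L * (L + 1) := by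
    rw [hmdef, hsum, Finset.sum_add_distrib, Finset.sum_const, Finset.card_range,
      smul_eq_mul, mul_one]
    have hg := Finset.sum_range_id_mul_two L
    have : 2 * (∑ k ∈ Finset.range L, k + L) = L * (L - 1) + 2 * L := by omega
    rw [this]
    have : L - 1 + 2 = L + 1 := by omega
    calc L * (L - 1) + 2 * L = L * (L - 1 + 2) := by rw [Nat.mul_add]; ring
    _ = L * (L + 1) := by rw [this]
  have hm1 : 1 ≤ m := by
    have : 1 * (1 + 1) ≤ L * (L + 1) := Nat.mul_le_mul hL1 (by omega)
    omega
  set W : Ω → ℝ := fun ω => S.sup' hS (fun i => Z i ω) with hWdef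
  have hW : Measurable W := by
    have h1 := Finset.measurable_sup' hS (fun i _ => hI.meas i)
    have h2 : (S.sup' hS fun i => Z i) = W := by
      funext ω; exact Finset.sup'_apply hS Z ω
    rwa [h2] at h1
  have hWcdf : ∀ t ∈ Set.Icc (0:ℝ) 1, μ {ω | W ω ≤ t} = ENNReal.ofReal (t ^ m) := by
    intro t ht
    have hset : {ω | W ω ≤ t} = ⋂ i ∈ S, Z i ⁻¹' Set.Iic t := by
      ext ω
      simp [hWdef, Finset.sup'_le_iff, Set.mem_iInter]
    rw [hset, hI.indep.measure_inter_preimage_eq_mul S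
      (sets := fun _ => Set.Iic t) (fun i _ => measurableSet_Iic)]
    have hc : ∀ i ∈ S, μ (Z i ⁻¹' Set.Iic t) = ENNReal.ofReal (t ^ ((i:ℕ)+1)) :=
      fun i _ => hI.cdf i t ht
    rw [Finset.prod_congr rfl hc,
      ← ENNReal.ofReal_prod_of_nonneg (fun i _ => pow_nonneg ht.1 _),
      Finset.prod_pow_eq_pow_sum]
  have hlastn : ((last : ℕ)) + 1 = n := by simp only [hlast]; omega
  have hYcdf : ∀ t ∈ Set.Icc (0:ℝ) 1, μ {ω | Z last ω ≤ t} = ENNReal.ofReal (t ^ n) := by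
    intro t ht
    rw [hI.cdf last t ht, hlastn]
  -- independence of W and Z last
  have hdisj : Disjoint S {last} := Finset.disjoint_singleton_right.2 hlastS
  have hbase := hI.indep.indepFun_finset S {last} hdisj hI.meas
  have hSat : S.attach.Nonempty := hS.attach
  have hindep : IndepFun W (Z last) μ := by
    have hφ : Measurable (fun v : {x // x ∈ S} → ℝ =>
        S.attach.sup' hSat (fun i => v i)) := by
      have h1 := Finset.measurable_sup' hSat
        (fun (i : {x // x ∈ S}) (_ : i ∈ S.attach) =>
          (measurable_pi_apply i : Measurable fun v : {x // x ∈ S} → ℝ => v i))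
      have h2 : (S.attach.sup' hSat fun i (f : {x // x ∈ S} → ℝ) => f i)
          = fun v => S.attach.sup' hSat (fun i => v i) :=
        funext fun v => Finset.sup'_apply hSat _ v
      rwa [h2] at h1
    have hψ : Measurable (fun v : {x // x ∈ ({last} : Finset (Fin n))} → ℝ =>
        v ⟨last, Finset.mem_singleton_self last⟩) := measurable_pi_apply _
    have := hbase.comp hφ hψ
    have heq1 : ((fun v : {x // x ∈ S} → ℝ => S.attach.sup' hSat (fun i => v i))
        ∘ (fun a (i : {x // x ∈ S}) => Z i a)) = W := by
      funext a
      simp only [Function.comp_apply, hWdef]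
      refine le_antisymm (Finset.sup'_le _ _ ?_) (Finset.sup'_le _ _ ?_)
      · intro i _
        exact Finset.le_sup' (fun j => Z j a) i.2
      · intro i hi
        exact Finset.le_sup' (fun j : (S : Finset (Fin n)) => Z j a)
          (Finset.mem_attach _ ⟨i, hi⟩)
    have heq2 : ((fun v : {x // x ∈ ({last} : Finset (Fin n))} → ℝ =>
        v ⟨last, Finset.mem_singleton_self last⟩)
        ∘ (fun a (i : {x // x ∈ ({last} : Finset (Fin n))}) => Z i a)) = Z last := by
      funext a; rfl
    rwa [heq1, heq2] at this
  -- identify the events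
  have hae : {ω | inEventA n (ρ ω)} =ᵐ[μ] {ω | W ω < Z last ω} := by
    filter_upwards [hI.rank] with ω hω
    have hiff : inEventA n (ρ ω) ↔ W ω < Z last ω := by
      have hWω : W ω = S.sup' hS (fun i => Z i ω) := rfl
      rw [hWω, Finset.sup'_lt_iff]
      constructor
      · intro hA i hi
        have hi' : (i : ℕ) + 1 ≤ L := (hmemS i).1 hi
        exact (hω i last).1 (hA i hi' last rfl)
      · intro hB i hi j hj
        have hjlast : j = last := by ext; exact hj
        subst hjlast
        exact (hω i last).2 (hB i ((hmemS i).2 hi))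
    exact propext hiff
  rw [measure_congr hae]
  have := measure_lt_of_cdf_pow μ W (Z last) hW (hI.meas last) hindep m n hm1
    (by omega) hWcdf hYcdf
  rw [this]
  congr 1
  have hmr : (m : ℝ) = (L : ℝ) * ((L : ℝ) + 1) / 2 := by
    have : ((2 * m : ℕ) : ℝ) = ((L * (L + 1) : ℕ) : ℝ) := by rw [hm2]
    push_cast at this
    linarith
  rw [hmr]
  ring_nf

lemma tendsto_diff_part :
    Tendsto (fun n : ℕ => (n : ℝ)
        / ((n : ℝ) + (⌊Real.log n⌋₊ : ℝ) * ((⌊Real.log n⌋₊ : ℝ) + 1) / 2)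
      - 1 / ((⌊Real.log n⌋₊ : ℝ) + 1)) atTop (𝓝 1) := by
  set L : ℕ → ℝ := fun n => (⌊Real.log n⌋₊ : ℝ) with hLdef
  have hLtop : Tendsto L atTop atTop := by
    exact tendsto_natCast_atTop_atTop.comp (tendsto_nat_floor_atTop.comp
      (Real.tendsto_log_atTop.comp tendsto_natCast_atTop_atTop))
  have h2 : Tendsto (fun n : ℕ => 1 / (L n + 1)) atTop (𝓝 0) := by
    simp only [one_div]
    exact (tendsto_atTop_add_const_right _ 1 hLtop).inv_tendsto_atTop
  set g : ℕ → ℝ := fun n => L n * (L n + 1) / 2 with hgdef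
  have hgnn : ∀ n, 0 ≤ g n := by
    intro n
    have : (0:ℝ) ≤ L n := Nat.cast_nonneg _
    rw [hgdef]
    positivity
  -- upper bound function on ℝ
  have hF : Tendsto (fun x : ℝ => ((Real.log x + 1) ^ 2 / 2) / x) atTop (𝓝 0) := by
    have t1 := Real.tendsto_pow_log_div_mul_add_atTop 2 0 2 two_ne_zero
    have t2 := Real.tendsto_pow_log_div_mul_add_atTop 1 0 1 one_ne_zero
    have t3 : Tendsto (fun x : ℝ => 1 / (2 * x)) atTop (𝓝 0) := by
      simp only [one_div]
      exact (tendsto_const_nhds.pos_mul_atTop two_pos tendsto_id).inv_tendsto_atTop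
    have hsum := (t1.add t2).add t3
    rw [add_zero, add_zero] at hsum
    refine hsum.congr' ?_
    filter_upwards [eventually_gt_atTop (0:ℝ)] with x hx
    have hx' : x ≠ 0 := ne_of_gt hx
    field_simp
    ring
  have hFn : Tendsto (fun n : ℕ => ((Real.log n + 1) ^ 2 / 2) / (n : ℝ)) atTop (𝓝 0) :=
    hF.comp tendsto_natCast_atTop_atTop
  have hgn : Tendsto (fun n : ℕ => g n / n) atTop (𝓝 0) := by
    refine squeeze_zero' ?_ ?_ hFn
    · filter_upwards [eventually_ge_atTop 1] with n hn
      exact div_nonneg (hgnn n) (Nat.cast_nonneg n)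
    · filter_upwards [eventually_ge_atTop 1] with n hn
      have hn0 : (0:ℝ) < n := by exact_mod_cast hn
      have hlog0 : 0 ≤ Real.log n := Real.log_natCast_nonneg n
      have hLle : L n ≤ Real.log n := Nat.floor_le (by positivity)
      have hnum : g n ≤ (Real.log n + 1) ^ 2 / 2 := by
        rw [hgdef]
        have h0L : (0:ℝ) ≤ L n := Nat.cast_nonneg _
        nlinarith
      gcongr
  have hmain : Tendsto (fun n : ℕ => (n : ℝ) / ((n : ℝ) + g n)) atTop (𝓝 1) := by
    have h1 : Tendsto (fun n : ℕ => 1 / (1 + g n / n)) atTop (𝓝 1) := by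
      have h0 : Tendsto (fun n : ℕ => (1:ℝ)) atTop (𝓝 1) := tendsto_const_nhds
      have := h0.div (tendsto_const_nhds.add hgn) (by norm_num : (1:ℝ) + 0 ≠ 0)
      norm_num at this
      exact this.congr (fun n => by simp [Pi.div_apply])
    refine h1.congr' ?_
    filter_upwards [eventually_ge_atTop 1] with n hn
    have hn0 : (0:ℝ) < n := by exact_mod_cast hn
    have hden : (0:ℝ) < (n : ℝ) + g n := by
      have := hgnn n; linarith
    field_simp
  have := hmain.sub h2
  rw [sub_zero] at this
  exact this

end Aux


/-- For `n ≥ 3` and `L = ⌊log n⌋`, the set `A_n = {τ ∈ S_n : τ(i) < τ(n) for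
all 1 ≤ i ≤ L}` has uniform probability `1/(L+1)`, while
`P(ρ_n ∈ A_n) = n / (n + L(L+1)/2)`; consequently
`P(ρ_n ∈ A_n) - P(π_n ∈ A_n) → 1` as `n → ∞`. -/
theorem stmt_10 (Ω : ℕ → Type*) [∀ n, MeasurableSpace (Ω n)]
    (μ : ∀ n, Measure (Ω n)) (Z : ∀ n, Fin n → Ω n → ℝ)
    (ρ : ∀ n, Ω n → Equiv.Perm (Fin n))
    (h : ∀ n, IsInverseUnfair (μ n) (Z n) (ρ n)) :
    (∀ n, 3 ≤ n →
      (((Finset.univ.filter (inEventA n)).card : ℝ) / (Nat.factorial n : ℝ)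
          = 1 / ((⌊Real.log n⌋₊ : ℝ) + 1)) ∧
      μ n {ω | inEventA n (ρ n ω)}
          = ENNReal.ofReal ((n : ℝ)
              / ((n : ℝ) + (⌊Real.log n⌋₊ : ℝ) * ((⌊Real.log n⌋₊ : ℝ) + 1) / 2))) ∧
    Tendsto (fun n =>
        (μ n {ω | inEventA n (ρ n ω)}).toReal
          - ((Finset.univ.filter (inEventA n)).card : ℝ) / (Nat.factorial n : ℝ))
      atTop (𝓝 1) := by
  have hpoint : ∀ n, 3 ≤ n →
      ((((Finset.univ.filter (inEventA n)).card : ℝ) / (Nat.factorial n : ℝ)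
          = 1 / ((⌊Real.log n⌋₊ : ℝ) + 1)) ∧
      μ n {ω | inEventA n (ρ n ω)}
          = ENNReal.ofReal ((n : ℝ)
              / ((n : ℝ) + (⌊Real.log n⌋₊ : ℝ) * ((⌊Real.log n⌋₊ : ℝ) + 1) / 2))) := by
    intro n hn
    obtain ⟨hL1, hLn1⟩ := log_facts n hn
    constructor
    · have hc := card_event_mul n ⌊Real.log n⌋₊ (by omega) hLn1 (inEventA n)
        (fun τ => Iff.rfl)
      have hfac : (0:ℝ) < (n.factorial : ℝ) := by exact_mod_cast n.factorial_pos
      have hden : (0:ℝ) < (⌊Real.log n⌋₊ : ℝ) + 1 := by positivity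
      rw [div_eq_div_iff hfac.ne' hden.ne']
      have hcast := congrArg (fun k : ℕ => (k : ℝ)) hc
      push_cast at hcast ⊢
      linarith
    · exact prob_eventA n hn (μ n) (Z n) (ρ n) (h n)
  refine ⟨hpoint, ?_⟩
  refine Tendsto.congr' ?_ tendsto_diff_part
  filter_upwards [eventually_ge_atTop 3] with n hn
  obtain ⟨h1, h2⟩ := hpoint n hn
  have hnn : (0:ℝ) ≤ (n : ℝ)
      / ((n : ℝ) + (⌊Real.log n⌋₊ : ℝ) * ((⌊Real.log n⌋₊ : ℝ) + 1) / 2) := by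
    positivity
  rw [h2, h1, ENNReal.toReal_ofReal hnn]
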